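/- Let ℓ, u ∈ ℝⁿ with ℓ < u componentwise, let B = {v ∈ ℝⁿ : ℓ < v < u} (componentwise), and let M : ℝⁿ → ℝ be continuously differentiable on B. Let v_0 ∈ B be such that the level set L = {v ∈ B : M(v) ≤ M(v_0)} is a compact subset of B. Fix σ ∈ (0,1), γ > 0, η_A ∈ (0,1), and θ > 0. Suppose the sequences (v_k) ⊂ B and (Δv_k) ⊂ ℝⁿ satisfy: ∇M(v_k)ᵀΔv_k < 0 and ‖Δv_k‖ ≤ θ for all k; and v_{k+1} = proj_{Ω_k}(v_k + α_k Δv_k), where Ω_k = {v : v_k − σ(v_k − ℓ) ≤ v ≤ v_k + σ(u − v_k)}, proj_{Ω_k} is the componentwise projection onto Ω_k, and α_k is a quasi-Armijo step for ψ_k(α) = M(proj_{Ω_k}(v_k + αΔv_k)). Then lim_{k→∞} |∇M(v_k)ᵀΔv_k| = 0. -/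

import Mathlib

open scoped Classical

noncomputable section

/-- Componentwise projection onto the box `[l, u]`. -/
def boxProj {n : ℕ} (l u : Fin n → ℝ) (x : Fin n → ℝ) : Fin n → ℝ :=
  fun i => if x i < l i then l i else if u i < x i then u i else x i

/-- The projected direction `P_y(p)` of `p` at `y`. -/
def projDir {n : ℕ} (l u : Fin n → ℝ) (y p : Fin n → ℝ) : Fin n → ℝ :=
  fun i => if (y i = l i ∧ p i < 0) ∨ (y i = u i ∧ 0 < p i) then 0 else p i

/-- The projected path `α ↦ proj_Ω(x + α p)`. -/
def boxPath {n : ℕ} (l u x p : Fin n → ℝ) (α : ℝ) : Fin n → ℝ :=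
  boxProj l u (fun i => x i + α * p i)

/-- `α` is a kink step with respect to index `i`. -/
def IsKink {n : ℕ} (l u x p : Fin n → ℝ) (α : ℝ) (i : Fin n) : Prop :=
  (x i + α * p i = l i ∧ p i < 0) ∨ (x i + α * p i = u i ∧ 0 < p i)

/-- The vector `P⁻_{x(α)}(p)`. -/
def projDirMinus {n : ℕ} (l u x p : Fin n → ℝ) (α : ℝ) : Fin n → ℝ :=
  fun i => if IsKink l u x p α i then p i else projDir l u (boxPath l u x p α) p i

/-- The right derivative `ψ'₊(α) = ∇f(x(α))ᵀ P_{x(α)}(p)`. -/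
def psiDp {n : ℕ} (f : (Fin n → ℝ) → ℝ) (l u x p : Fin n → ℝ) (α : ℝ) : ℝ :=
  fderiv ℝ f (boxPath l u x p α) (projDir l u (boxPath l u x p α) p)

/-- The left derivative `ψ'₋(α) = ∇f(x(α))ᵀ P⁻_{x(α)}(p)`. -/
def psiDm {n : ℕ} (f : (Fin n → ℝ) → ℝ) (l u x p : Fin n → ℝ) (α : ℝ) : ℝ :=
  fderiv ℝ f (boxPath l u x p α) (projDirMinus l u x p α)

/-- `α` is a quasi-Wolfe step for the path `α ↦ proj_Ω(x + α p)`. -/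
def QuasiWolfeStep {n : ℕ} (f : (Fin n → ℝ) → ℝ) (l u x p : Fin n → ℝ)
    (ηA ηW α : ℝ) : Prop :=
  0 < α ∧
  f (boxPath l u x p α) ≤ f (boxPath l u x p 0) + α * ηA * psiDp f l u x p 0 ∧
  (|psiDm f l u x p α| ≤ ηW * |psiDp f l u x p 0| ∨
   |psiDp f l u x p α| ≤ ηW * |psiDp f l u x p 0| ∨
   (psiDm f l u x p α ≠ psiDp f l u x p α ∧
     psiDm f l u x p α ≤ 0 ∧ 0 ≤ psiDp f l u x p α))

/-- The `i`-th component of the gradient of `f` at `y`. -/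
def gradComp {n : ℕ} (f : (Fin n → ℝ) → ℝ) (y : Fin n → ℝ) (i : Fin n) : ℝ :=
  fderiv ℝ f y (Pi.single i 1)

/-- Membership of `i` in the working set at `y` with parameter `ε`. -/
def InWS {n : ℕ} (f : (Fin n → ℝ) → ℝ) (l u y : Fin n → ℝ) (ε : ℝ) (i : Fin n) : Prop :=
  (y i ≤ l i + ε ∧ 0 < gradComp f y i) ∨ (u i - ε ≤ y i ∧ gradComp f y i < 0)

/-- The norm `‖Πᵀ∇f(y)‖` of the gradient projected off the working set. -/
def projGradNorm {n : ℕ} (f : (Fin n → ℝ) → ℝ) (l u y : Fin n → ℝ) (ε : ℝ) : ℝ :=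
  Real.sqrt (∑ i, (if InWS f l u y ε i then 0 else gradComp f y i) ^ 2)

/-- Euclidean norm on `Fin n → ℝ`. -/
def euclNorm {n : ℕ} (v : Fin n → ℝ) : ℝ :=
  Real.sqrt (∑ i, v i ^ 2)

end

private lemma abs_le_euclNorm {n : ℕ} (p : Fin n → ℝ) (i : Fin n) : |p i| ≤ euclNorm p := by
  rw [euclNorm, ← Real.sqrt_sq_eq_abs]
  exact Real.sqrt_le_sqrt (Finset.single_le_sum (fun j _ => sq_nonneg (p j)) (Finset.mem_univ i))

private lemma boxPath_eq_of_le {n : ℕ} {l u x p : Fin n → ℝ} {a : ℝ}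
    (h : ∀ i, l i ≤ x i + a * p i ∧ x i + a * p i ≤ u i) :
    boxPath l u x p a = x + a • p := by
  funext i
  simp only [boxPath, boxProj, Pi.add_apply, Pi.smul_apply, smul_eq_mul]
  rw [if_neg (not_lt.2 (h i).1), if_neg (not_lt.2 (h i).2)]

/-- **Theorem 5.5: interior projected search with a quasi-Armijo search.**
For iterates `v_{k+1} = proj_{Ω_k}(v_k + α_k Δv_k)` with
`Ω_k = {v : v_k − σ(v_k − ℓ) ≤ v ≤ v_k + σ(u − v_k)}` and `α_k` a quasi-Armijo step,
`|∇M(v_k)ᵀΔv_k| → 0`. -/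
theorem interior_quasi_armijo {n : ℕ} (M : (Fin n → ℝ) → ℝ) (l u : Fin n → ℝ)
    (σ γ ηA θ : ℝ)
    (hlu : ∀ i, l i < u i)
    (hM : ContDiffOn ℝ 1 M {w : Fin n → ℝ | ∀ i, l i < w i ∧ w i < u i})
    (hσ : 0 < σ) (hσ1 : σ < 1) (hγ : 0 < γ)
    (hηA : 0 < ηA) (hηA1 : ηA < 1) (hθ : 0 < θ)
    (v dv : ℕ → Fin n → ℝ) (α : ℕ → ℝ)
    (hvB : ∀ k i, l i < v k i ∧ v k i < u i)
    (hcpt : IsCompact {w : Fin n → ℝ | (∀ i, l i < w i ∧ w i < u i) ∧ M w ≤ M (v 0)})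
    (hdesc : ∀ k, fderiv ℝ M (v k) (dv k) < 0)
    (hbd : ∀ k, euclNorm (dv k) ≤ θ)
    (hupd : ∀ k, v (k + 1) =
      boxPath (fun i => v k i - σ * (v k i - l i))
              (fun i => v k i + σ * (u i - v k i)) (v k) (dv k) (α k))
    (hQA : ∀ k, ∃ t : ℕ, α k = γ * σ ^ t ∧
      M (boxPath (fun i => v k i - σ * (v k i - l i))
                 (fun i => v k i + σ * (u i - v k i)) (v k) (dv k) (γ * σ ^ t)) ≤
        M (v k) + (γ * σ ^ t) * ηA * fderiv ℝ M (v k) (dv k) ∧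
      ∀ s : ℕ, s < t →
        ¬ (M (boxPath (fun i => v k i - σ * (v k i - l i))
                      (fun i => v k i + σ * (u i - v k i)) (v k) (dv k) (γ * σ ^ s)) ≤
           M (v k) + (γ * σ ^ s) * ηA * fderiv ℝ M (v k) (dv k))) :
    Filter.Tendsto (fun k => |fderiv ℝ M (v k) (dv k)|) Filter.atTop (nhds 0) := by
  have hBopen : IsOpen {w : Fin n → ℝ | ∀ i, l i < w i ∧ w i < u i} := by
    have he : {w : Fin n → ℝ | ∀ i, l i < w i ∧ w i < u i}
        = ⋂ i, ({w : Fin n → ℝ | l i < w i} ∩ {w : Fin n → ℝ | w i < u i}) := by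
      ext w
      simp [Set.mem_iInter, Set.mem_setOf_eq]
    rw [he]
    exact isOpen_iInter_of_finite fun i =>
      (isOpen_lt continuous_const (continuous_apply i)).inter
        (isOpen_lt (continuous_apply i) continuous_const)
  set B : Set (Fin n → ℝ) := {w : Fin n → ℝ | ∀ i, l i < w i ∧ w i < u i} with hBdef
  set L : Set (Fin n → ℝ) := {w : Fin n → ℝ | (∀ i, l i < w i ∧ w i < u i) ∧ M w ≤ M (v 0)}
    with hLdef
  set g : ℕ → ℝ := fun k => fderiv ℝ M (v k) (dv k) with hgdef
  have hgneg : ∀ k, g k < 0 := hdesc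
  have hαpos : ∀ k, 0 < α k := by
    intro k
    obtain ⟨t, ht, -, -⟩ := hQA k
    rw [ht]; positivity
  have hArm : ∀ k, M (v (k + 1)) ≤ M (v k) + α k * ηA * g k := by
    intro k
    obtain ⟨t, ht, hA, -⟩ := hQA k
    rw [hupd k, ht]
    exact hA
  have hMdec : ∀ k, M (v (k + 1)) ≤ M (v k) := by
    intro k
    have h1 : α k * ηA * g k < 0 :=
      mul_neg_of_pos_of_neg (mul_pos (hαpos k) hηA) (hgneg k)
    linarith [hArm k]
  have hanti : Antitone fun k => M (v k) := antitone_nat_of_succ_le hMdec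
  have hvL : ∀ k, v k ∈ L := fun k => ⟨hvB k, hanti (Nat.zero_le k)⟩
  have hLB : L ⊆ B := fun w hw => hw.1
  have hdiffB : ∀ w ∈ B, DifferentiableAt ℝ M w := fun w hw =>
    (hM.differentiableOn one_ne_zero).differentiableAt (hBopen.mem_nhds hw)
  -- bounded below
  obtain ⟨x₀, hx₀L, hx₀⟩ := hcpt.exists_isMinOn ⟨v 0, hvL 0⟩ ((hM.continuousOn).mono hLB)
  have hlb : ∀ k, M x₀ ≤ M (v k) := fun k => hx₀ (hvL k)
  have hconv : Filter.Tendsto (fun k => M (v k)) Filter.atTop (nhds (⨅ k, M (v k))) :=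
    tendsto_atTop_ciInf hanti ⟨M x₀, by rintro y ⟨k, rfl⟩; exact hlb k⟩
  have hdiff0 : Filter.Tendsto (fun k => M (v k) - M (v (k + 1))) Filter.atTop (nhds 0) := by
    have h2 : Filter.Tendsto (fun k => M (v (k + 1))) Filter.atTop (nhds (⨅ k, M (v k))) :=
      hconv.comp (Filter.tendsto_add_atTop_nat 1)
    simpa using hconv.sub h2
  have hA0 : Filter.Tendsto (fun k => α k * -g k) Filter.atTop (nhds 0) := by
    apply squeeze_zero (fun k => (mul_pos (hαpos k) (neg_pos.2 (hgneg k))).le)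
      (g := fun k => (M (v k) - M (v (k + 1))) / ηA)
    · intro k
      rw [le_div_iff₀ hηA]
      nlinarith [hArm k]
    · simpa using hdiff0.div_const ηA
  -- norm facts
  have hdvθ : ∀ k i, |dv k i| ≤ θ := fun k i => (abs_le_euclNorm (dv k) i).trans (hbd k)
  have hdvnorm : ∀ k, ‖dv k‖ ≤ θ := fun k =>
    (pi_norm_le_iff_of_nonneg hθ.le).2 fun i => by rw [Real.norm_eq_abs]; exact hdvθ k i
  -- contradiction setup
  show Filter.Tendsto (fun k => |g k|) Filter.atTop (nhds 0)
  by_contra hcon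
  rw [Metric.tendsto_atTop] at hcon
  push_neg at hcon
  obtain ⟨ε, hε, hfr⟩ := hcon
  have hfreq : ∃ᶠ k in Filter.atTop, ε ≤ |g k| := by
    rw [Filter.frequently_atTop]
    intro N
    obtain ⟨m, hm1, hm2⟩ := hfr N
    exact ⟨m, hm1, by simpa [Real.dist_eq, abs_abs] using hm2⟩
  obtain ⟨ψ, hψ, hψε⟩ := Filter.extraction_of_frequently_atTop hfreq
  obtain ⟨vs, hvsL, φ2, hφ2, hvconv⟩ := hcpt.tendsto_subseq fun j => hvL (ψ j)
  set φ : ℕ → ℕ := ψ ∘ φ2 with hφdef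
  have hφmono : StrictMono φ := hψ.comp hφ2
  have hεφ : ∀ j, ε ≤ |g (φ j)| := fun j => hψε (φ2 j)
  have hgφ : ∀ j, g (φ j) ≤ -ε := by
    intro j
    have h1 := hεφ j
    have h2 := hgneg (φ j)
    rw [abs_of_neg h2] at h1
    linarith
  have hvconv' : Filter.Tendsto (fun j => v (φ j)) Filter.atTop (nhds vs) := hvconv
  have hα0 : Filter.Tendsto (fun j => α (φ j)) Filter.atTop (nhds 0) := by
    have hsub : Filter.Tendsto (fun j => α (φ j) * -g (φ j)) Filter.atTop (nhds 0) :=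
      hA0.comp hφmono.tendsto_atTop
    apply squeeze_zero (fun j => (hαpos (φ j)).le) (g := fun j => α (φ j) * -g (φ j) / ε)
    · intro j
      rw [le_div_iff₀ hε]
      exact mul_le_mul_of_nonneg_left (by linarith [hgφ j]) (hαpos (φ j)).le
    · simpa using hsub.div_const ε
  have hβ0 : Filter.Tendsto (fun j => α (φ j) / σ * θ) Filter.atTop (nhds 0) := by
    simpa using (hα0.div_const σ).mul_const θ
  have hvsB : vs ∈ B := hvsL.1
  -- eventually facts
  have hEm : ∀ᶠ j in Filter.atTop, ∀ i,
      α (φ j) / σ * θ ≤ σ * (v (φ j) i - l i) ∧ α (φ j) / σ * θ ≤ σ * (u i - v (φ j) i) := by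
    rw [Filter.eventually_all]
    intro i
    have hvi : Filter.Tendsto (fun j => v (φ j) i) Filter.atTop (nhds (vs i)) :=
      ((continuous_apply i).continuousAt.tendsto).comp hvconv'
    have h1 : Filter.Tendsto (fun j => σ * (v (φ j) i - l i)) Filter.atTop
        (nhds (σ * (vs i - l i))) := (hvi.sub_const (l i)).const_mul σ
    have h2 : Filter.Tendsto (fun j => σ * (u i - v (φ j) i)) Filter.atTop
        (nhds (σ * (u i - vs i))) := ((tendsto_const_nhds.sub hvi)).const_mul σ
    have hp1 : (0:ℝ) < σ * (vs i - l i) := mul_pos hσ (by linarith [(hvsB i).1])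
    have hp2 : (0:ℝ) < σ * (u i - vs i) := mul_pos hσ (by linarith [(hvsB i).2])
    exact ((hβ0.eventually_lt h1 hp1).and (hβ0.eventually_lt h2 hp2)).mono
      fun j hj => ⟨hj.1.le, hj.2.le⟩
  have hE2 : ∀ᶠ j in Filter.atTop, α (φ j) < γ :=
    hα0.eventually_lt tendsto_const_nhds hγ
  -- continuity of fderiv at vs
  have hfca : ContinuousAt (fderiv ℝ M) vs :=
    (hM.continuousOn_fderiv_of_isOpen hBopen le_rfl).continuousAt (hBopen.mem_nhds hvsB)
  set ε' : ℝ := (1 - ηA) * ε / (2 * θ) with hε'def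
  have hε'pos : 0 < ε' := div_pos (mul_pos (by linarith) hε) (by positivity)
  obtain ⟨r, hr, hball⟩ := Metric.continuousAt_iff.1 hfca ε' hε'pos
  have hE3 : ∀ᶠ j in Filter.atTop, dist (v (φ j)) vs < r / 2 :=
    (hvconv'.eventually (Metric.ball_mem_nhds vs (by linarith : (0:ℝ) < r / 2))).mono
      fun j hj => Metric.mem_ball.1 hj
  have hE4 : ∀ᶠ j in Filter.atTop, α (φ j) / σ * θ < r / 2 :=
    hβ0.eventually_lt tendsto_const_nhds (by linarith)
  obtain ⟨j, hmj, hlγ, hdist, hβr⟩ := (hEm.and (hE2.and (hE3.and hE4))).exists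
  set k := φ j with hkdef
  obtain ⟨t, hαt, hAr, hfail⟩ := hQA k
  have ht0 : t ≠ 0 := by
    rintro rfl
    rw [pow_zero, mul_one] at hαt
    rw [hαt] at hlγ
    exact lt_irrefl _ hlγ
  obtain ⟨s, rfl⟩ : ∃ s, t = s + 1 := ⟨t - 1, by omega⟩
  have hfs := hfail s (by omega)
  set β : ℝ := γ * σ ^ s with hβdef
  have hβpos : 0 < β := by positivity
  have hβα : α k = σ * β := by rw [hαt, hβdef, pow_succ]; ring
  have hβeq : α k / σ = β := by rw [hβα]; field_simp
  rw [hβeq] at hmj hβr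
  -- box path is the straight path at β
  have hid : boxPath (fun i => v k i - σ * (v k i - l i))
      (fun i => v k i + σ * (u i - v k i)) (v k) (dv k) β = v k + β • dv k := by
    apply boxPath_eq_of_le
    intro i
    have habs : |β * dv k i| ≤ β * θ := by
      rw [abs_mul, abs_of_pos hβpos]
      exact mul_le_mul_of_nonneg_left (hdvθ k i) hβpos.le
    have h1 := (hmj i).1
    have h2 := (hmj i).2
    have h3 := abs_le.1 habs
    refine ⟨?_, ?_⟩
    · show v k i - σ * (v k i - l i) ≤ v k i + β * dv k i
      linarith [h3.1]
    · show v k i + β * dv k i ≤ v k i + σ * (u i - v k i)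
      linarith [h3.2]
  -- the whole segment lies in B
  have hseg : ∀ c ∈ Set.Icc (0:ℝ) β, v k + c • dv k ∈ B := by
    intro c hc i
    have habs : |c * dv k i| ≤ β * θ := by
      rw [abs_mul, abs_of_nonneg hc.1]
      exact mul_le_mul hc.2 (hdvθ k i) (abs_nonneg _) hβpos.le
    have h1 := (hmj i).1
    have h2 := (hmj i).2
    have h3 := abs_le.1 habs
    have h4 : σ * (v k i - l i) < v k i - l i :=
      mul_lt_of_lt_one_left (by linarith [(hvB k i).1]) hσ1
    have h5 : σ * (u i - v k i) < u i - v k i :=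
      mul_lt_of_lt_one_left (by linarith [(hvB k i).2]) hσ1
    simp only [Pi.add_apply, Pi.smul_apply, smul_eq_mul]
    exact ⟨by linarith [h3.1], by linarith [h3.2]⟩
  -- derivative along the path
  have hpath : ∀ c ∈ Set.Icc (0:ℝ) β, HasDerivAt (fun s : ℝ => M (v k + s • dv k))
      ((fderiv ℝ M (v k + c • dv k)) (dv k)) c := by
    intro c hc
    have hdM : DifferentiableAt ℝ M (v k + c • dv k) := hdiffB _ (hseg c hc)
    have hι : HasDerivAt (fun s : ℝ => v k + s • dv k) (dv k) c := by
      have h1 : HasDerivAt (fun s : ℝ => s • dv k) ((1:ℝ) • dv k) c :=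
        (hasDerivAt_id c).smul_const (dv k)
      simpa using h1.const_add (v k)
    exact hdM.hasFDerivAt.comp_hasDerivAt c hι
  obtain ⟨c, hcmem, hcslope⟩ := exists_hasDerivAt_eq_slope
    (fun s : ℝ => M (v k + s • dv k))
    (fun s : ℝ => (fderiv ℝ M (v k + s • dv k)) (dv k)) hβpos
    (fun s hs => (hpath s hs).continuousAt.continuousWithinAt)
    (fun s hs => hpath s (Set.mem_Icc_of_Ioo hs))
  simp only [zero_smul, add_zero, sub_zero] at hcslope
  -- failed Armijo condition at β
  rw [hid, not_le] at hfs
  have hslope_gt : ηA * g k < (fderiv ℝ M (v k + c • dv k)) (dv k) := by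
    rw [hcslope, lt_div_iff₀ hβpos]
    nlinarith [hfs]
  -- distance estimates
  have hwnear : dist (v k + c • dv k) vs < r := by
    have h1 : dist (v k + c • dv k) (v k) ≤ β * θ := by
      rw [dist_eq_norm, add_sub_cancel_left, norm_smul, Real.norm_eq_abs,
        abs_of_pos hcmem.1]
      exact mul_le_mul hcmem.2.le (hdvnorm k) (norm_nonneg _) hβpos.le
    calc dist (v k + c • dv k) vs ≤ dist (v k + c • dv k) (v k) + dist (v k) vs :=
          dist_triangle _ _ _
      _ < r := by linarith
  have hdM1 : dist (fderiv ℝ M (v k + c • dv k)) (fderiv ℝ M vs) < ε' := hball hwnear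
  have hdM2 : dist (fderiv ℝ M (v k)) (fderiv ℝ M vs) < ε' := by
    apply hball
    calc dist (v k) vs < r / 2 := hdist
      _ < r := by linarith
  have hdd : ‖fderiv ℝ M (v k + c • dv k) - fderiv ℝ M (v k)‖ < 2 * ε' := by
    rw [← dist_eq_norm]
    calc dist (fderiv ℝ M (v k + c • dv k)) (fderiv ℝ M (v k))
        ≤ dist (fderiv ℝ M (v k + c • dv k)) (fderiv ℝ M vs)
          + dist (fderiv ℝ M (v k)) (fderiv ℝ M vs) := dist_triangle_right _ _ _
      _ < 2 * ε' := by linarith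
  have happ : |(fderiv ℝ M (v k + c • dv k)) (dv k) - g k| < 2 * ε' * θ := by
    have h1 : (fderiv ℝ M (v k + c • dv k)) (dv k) - g k
        = (fderiv ℝ M (v k + c • dv k) - fderiv ℝ M (v k)) (dv k) := by
      simp [hgdef]
    rw [h1, ← Real.norm_eq_abs]
    calc ‖(fderiv ℝ M (v k + c • dv k) - fderiv ℝ M (v k)) (dv k)‖
        ≤ ‖fderiv ℝ M (v k + c • dv k) - fderiv ℝ M (v k)‖ * ‖dv k‖ :=
          (fderiv ℝ M (v k + c • dv k) - fderiv ℝ M (v k)).le_opNorm _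
      _ ≤ ‖fderiv ℝ M (v k + c • dv k) - fderiv ℝ M (v k)‖ * θ :=
          mul_le_mul_of_nonneg_left (hdvnorm k) (norm_nonneg _)
      _ < 2 * ε' * θ := mul_lt_mul_of_pos_right hdd hθ
  have h2ε' : 2 * ε' * θ = (1 - ηA) * ε := by
    rw [hε'def]; field_simp
  rw [h2ε'] at happ
  have hD := le_abs_self ((fderiv ℝ M (v k + c • dv k)) (dv k) - g k)
  have hgk : g k ≤ -ε := hgφ j
  nlinarith [hslope_gt, happ, hD, hgk, hε, hηA1]
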